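/- Let C be a choice function on the integer box B satisfying (A1) and (A2). Let z ∈ B be acceptable and let e ∈ E be not interesting under z. Then for every ε ∈ ℕ with z(e) + ε ≤ b(e), one has C(z + ε·1^e) = z. -/
import Mathlib


namespace SGMMStmt

variable {E : Type*} [Fintype E] [DecidableEq E]

/-- Membership in the integer box `B = {z : E → ℕ | z e ≤ b e for all e}`. -/
def inBox (b z : E → ℕ) : Prop := ∀ e, z e ≤ b e

/-- `e` is interesting under `z`. -/
def Interesting (b : E → ℕ) (C : (E → ℕ) → (E → ℕ)) (z : E → ℕ) (e : E) : Prop :=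
  ∃ z', inBox b z' ∧ z e < z' e ∧ (∀ e', e' ≠ e → z' e' = z e') ∧ z e < C z' e

/-- Property (3.1): if `e` is not interesting under an acceptable `z`, then increasing
`z` at `e` by any `ε` within capacity leaves the chosen vector equal to `z`.
(Note `Pi.single e ε = ε • 1^e`.) -/
theorem statement2 (b : E → ℕ) (C : (E → ℕ) → (E → ℕ))
    (hC : ∀ z, inBox b z → C z ≤ z)
    (hA1 : ∀ z z' : E → ℕ, inBox b z → z' ≤ z → C z ≤ z' → C z' = C z)
    (hA2 : ∀ z z' : E → ℕ, inBox b z → z' ≤ z → C z ⊓ z' ≤ C z')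
    (z : E → ℕ) (hz : inBox b z) (hacc : C z = z) (e : E)
    (hni : ¬ Interesting b C z e) :
    ∀ ε : ℕ, z e + ε ≤ b e → C (z + Pi.single e ε) = z := by
  intro ε hε
  set z' : E → ℕ := z + Pi.single e ε with hz'
  have hz'e : z' e = z e + ε := by simp [hz']
  have hz'o : ∀ e', e' ≠ e → z' e' = z e' := by
    intro e' h; simp [hz', Pi.single_eq_of_ne h]
  have hbox : inBox b z' := by
    intro e'
    rcases eq_or_ne e' e with rfl | h
    · rw [hz'e]; exact hε
    · rw [hz'o e' h]; exact hz e'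
  have hle : z ≤ z' := by
    intro e'
    rcases eq_or_ne e' e with rfl | h
    · rw [hz'e]; exact Nat.le_add_right _ _
    · rw [hz'o e' h]
  rcases Nat.eq_zero_or_pos ε with rfl | hpos
  · have : z' = z := by
      funext e'
      rcases eq_or_ne e' e with rfl | h
      · simp [hz'e]
      · exact hz'o e' h
    rw [this, hacc]
  · have hCe : C z' e ≤ z e := by
      by_contra h
      exact hni ⟨z', hbox, by rw [hz'e]; omega, hz'o, by omega⟩
    have hCz : C z' ≤ z := by
      intro e'
      rcases eq_or_ne e' e with rfl | h
      · exact hCe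
      · rw [← hz'o e' h]; exact hC z' hbox e'
    have := hA1 z' z hbox hle hCz
    rw [← this, hacc]

end SGMMStmt
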